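/- Let q be a primitive l-th root of unity, l > 2, q' = -q of order l'. The nilpotent module M_d(λ) (defined via k = λQ, f = P, e = (1/η)P'(q^{1/2}λQ - q^{-1/2}λ^{-1}Q^{-1} - σU) on the d-dimensional space V_d, with σ = q^{1/2}λ - q^{-1/2}λ^{-1} and (q'^d-1)(λ^2 - q'^{d-1}) = 0) is irreducible if and only if ∏_{n=1}^{d-1} (q'^n - 1)(q^{1/2-d}λ + q^{d-1/2}λ^{-1} q'^{-n}) ≠ 0; equivalently, if and only if either d < l', or d = l' and q'λ^2 is not a nontrivial power of q'. -/

import Mathlib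

open Matrix

/-- `Q|m⟩ = q^{-m}|m⟩`. -/
noncomputable def Qmat (q : ℂ) (d : ℕ) : Matrix (Fin d) (Fin d) ℂ :=
  Matrix.diagonal fun m => (q⁻¹) ^ (m : ℕ)

/-- `Q⁻¹|m⟩ = q^{m}|m⟩`. -/
noncomputable def QmatInv (q : ℂ) (d : ℕ) : Matrix (Fin d) (Fin d) ℂ :=
  Matrix.diagonal fun m => q ^ (m : ℕ)

/-- `U|m⟩ = (-1)^m|m⟩`. -/
noncomputable def Umat (d : ℕ) : Matrix (Fin d) (Fin d) ℂ :=
  Matrix.diagonal fun m => (-1 : ℂ) ^ (m : ℕ)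

/-- Truncated shift `P|m⟩ = |m+1⟩`, with `P|d-1⟩ = 0`. -/
def Pnil (d : ℕ) : Matrix (Fin d) (Fin d) ℂ :=
  Matrix.of fun i j => if (i : ℕ) = (j : ℕ) + 1 then 1 else 0

/-- Truncated backward shift `P'|m⟩ = |m-1⟩`, with `P'|0⟩ = 0`. -/
def Pnil' (d : ℕ) : Matrix (Fin d) (Fin d) ℂ :=
  Matrix.of fun i j => if (j : ℕ) = (i : ℕ) + 1 then 1 else 0

private lemma shift_irred (d : ℕ) (hd : 1 ≤ d) (c : ℕ → ℂ) (g : Fin d → ℂ)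
    (E F K : (Fin d → ℂ) → Fin d → ℂ)
    (hE : ∀ v (i : Fin d), E v i =
      if h : (i : ℕ) + 1 < d then c ((i : ℕ) + 1) * v ⟨(i : ℕ) + 1, h⟩ else 0)
    (hF : ∀ v (i : Fin d), F v i =
      if (i : ℕ) = 0 then 0 else v ⟨(i : ℕ) - 1, lt_of_le_of_lt (Nat.pred_le _) i.isLt⟩)
    (hK : ∀ v (i : Fin d), K v i = g i * v i) :
    ((∀ W : Submodule ℂ (Fin d → ℂ),
        (∀ v ∈ W, E v ∈ W) → (∀ v ∈ W, F v ∈ W) → (∀ v ∈ W, K v ∈ W) →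
        W = ⊥ ∨ W = ⊤) ↔ ∀ n, 1 ≤ n → n < d → c n ≠ 0) := by
  constructor
  · -- irreducible → weights nonzero
    intro H n hn1 hnd hc0
    set W : Submodule ℂ (Fin d → ℂ) :=
      { carrier := {v | ∀ i : Fin d, (i : ℕ) < n → v i = 0}
        add_mem' := fun ha hb i hi => by simp [ha i hi, hb i hi]
        zero_mem' := fun i _ => rfl
        smul_mem' := fun t v hv i hi => by simp [hv i hi] } with hW
    have hmem : ∀ v, v ∈ W ↔ ∀ i : Fin d, (i : ℕ) < n → v i = 0 := fun v => Iff.rfl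
    have hWE : ∀ v ∈ W, E v ∈ W := by
      intro v hv
      rw [hmem] at hv ⊢
      intro i hi
      rw [hE]
      split_ifs with h
      · rcases Nat.lt_or_ge ((i : ℕ) + 1) n with h2 | h2
        · rw [hv ⟨(i : ℕ) + 1, h⟩ h2, mul_zero]
        · have hcc : c ((i : ℕ) + 1) = 0 := by
            have : (i : ℕ) + 1 = n := by omega
            rw [this]; exact hc0
          rw [hcc, zero_mul]
      · rfl
    have hWF : ∀ v ∈ W, F v ∈ W := by
      intro v hv
      rw [hmem] at hv ⊢
      intro i hi
      rw [hF]
      split_ifs with h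
      · rfl
      · exact hv _ (by simp; omega)
    have hWK : ∀ v ∈ W, K v ∈ W := by
      intro v hv
      rw [hmem] at hv ⊢
      intro i hi
      rw [hK, hv i hi, mul_zero]
    rcases H W hWE hWF hWK with hbot | htop
    · have : (Pi.single (⟨n, hnd⟩ : Fin d) (1 : ℂ)) ∈ W := by
        rw [hmem]
        intro i hi
        apply Pi.single_eq_of_ne
        intro hc
        rw [hc] at hi
        simp at hi
      rw [hbot] at this
      simp only [Submodule.mem_bot] at this
      have := congrFun this ⟨n, hnd⟩
      simp at this
    · have : (Pi.single (⟨0, by omega⟩ : Fin d) (1 : ℂ)) ∈ W := htop ▸ Submodule.mem_top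
      rw [hmem] at this
      have := this ⟨0, by omega⟩ (by simp; omega)
      simp at this
  · -- weights nonzero → irreducible
    intro hc W hWE hWF hWK
    by_cases hbot : W = ⊥
    · exact Or.inl hbot
    right
    obtain ⟨v, hvW, hv0⟩ : ∃ v ∈ W, v ≠ 0 := Submodule.ne_bot_iff W |>.mp hbot
    obtain ⟨m0, hm0⟩ : ∃ i : Fin d, v i ≠ 0 := by
      by_contra hcon
      push_neg at hcon
      exact hv0 (funext hcon)
    have hFiter : ∀ (k : ℕ) (v : Fin d → ℂ) (i : Fin d),
        F^[k] v i = if h : k ≤ (i : ℕ) then v ⟨(i : ℕ) - k, by omega⟩ else 0 := by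
      intro k
      induction k with
      | zero => intro v i; simp
      | succ k ih =>
        intro v i
        rw [Function.iterate_succ_apply, ih (F v) i]
        by_cases h2 : k + 1 ≤ (i : ℕ)
        · rw [dif_pos (by omega : k ≤ (i : ℕ)), dif_pos h2, hF]
          rw [if_neg (by simp; omega)]
          congr 1
        · rw [dif_neg h2]
          by_cases h1 : k ≤ (i : ℕ)
          · rw [dif_pos h1, hF, if_pos (by simp; omega)]
          · rw [dif_neg h1]
    have hFmem : ∀ (k : ℕ) (w : Fin d → ℂ), w ∈ W → F^[k] w ∈ W := by
      intro k
      induction k with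
      | zero => intro w hw; simpa using hw
      | succ k ih => intro w hw; rw [Function.iterate_succ_apply]; exact ih _ (hWF w hw)
    have hlast : (Pi.single (⟨d - 1, by omega⟩ : Fin d) (1 : ℂ)) ∈ W := by
      have claim : ∀ (m : ℕ) (hm : m < d) (v : Fin d → ℂ), v ∈ W → v ⟨m, hm⟩ ≠ 0 →
          (Pi.single (⟨d - 1, by omega⟩ : Fin d) (1 : ℂ)) ∈ W := by
        intro m
        induction m with
        | zero =>
          intro hm v hvW hv
          have hu : F^[d - 1] v ∈ W := hFmem _ _ hvW
          have heq : (v ⟨0, hm⟩)⁻¹ • F^[d - 1] v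
              = Pi.single (⟨d - 1, by omega⟩ : Fin d) (1 : ℂ) := by
            funext i
            rw [Pi.smul_apply, hFiter, smul_eq_mul]
            by_cases hi : (i : ℕ) = d - 1
            · rw [dif_pos (by omega)]
              have h1 : (⟨(i : ℕ) - (d - 1), by omega⟩ : Fin d) = ⟨0, hm⟩ := by
                apply Fin.ext; simp; omega
              rw [h1, inv_mul_cancel₀ hv]
              have h2 : i = (⟨d - 1, by omega⟩ : Fin d) := by apply Fin.ext; simpa using hi
              rw [h2, Pi.single_eq_same]
            · have hlt : (i : ℕ) < d - 1 := by have := i.isLt; omega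
              rw [dif_neg (by omega), mul_zero]
              rw [Pi.single_eq_of_ne]
              intro hcon
              rw [hcon] at hi
              simp at hi
          rw [← heq]
          exact W.smul_mem _ hu
        | succ m ih =>
          intro hm v hvW hv
          have hEv : E v ∈ W := hWE v hvW
          apply ih (by omega) (E v) hEv
          rw [hE]
          rw [dif_pos hm]
          exact mul_ne_zero (hc (m + 1) (by omega) hm) hv
      exact claim m0 m0.isLt v hvW hm0
    have hall : ∀ (j : ℕ), j < d → (Pi.single (⟨d - 1 - j, by omega⟩ : Fin d) (1 : ℂ)) ∈ W := by
      intro j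
      induction j with
      | zero => intro _; simpa using hlast
      | succ j ih =>
        intro hj
        have hs := ih (by omega)
        have hEs : E (Pi.single (⟨d - 1 - j, by omega⟩ : Fin d) (1 : ℂ)) ∈ W := hWE _ hs
        have heq : (c (d - 1 - j))⁻¹ • E (Pi.single (⟨d - 1 - j, by omega⟩ : Fin d) (1 : ℂ))
            = Pi.single (⟨d - 1 - (j + 1), by omega⟩ : Fin d) (1 : ℂ) := by
          funext i
          simp only [Pi.smul_apply, hE, smul_eq_mul, Pi.single_apply, Fin.ext_iff]
          by_cases hi : (i : ℕ) = d - 1 - (j + 1)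
          · rw [dif_pos (by omega : (i : ℕ) + 1 < d)]
            try simp only [Fin.val_mk]
            rw [if_pos (by omega : (i : ℕ) + 1 = d - 1 - j), if_pos hi, mul_one]
            rw [show (i : ℕ) + 1 = d - 1 - j by omega]
            exact inv_mul_cancel₀ (hc (d - 1 - j) (by omega) (by omega))
          · rw [if_neg hi]
            split_ifs with h h2
            · exfalso; omega
            · rw [mul_zero, mul_zero]
            · rw [mul_zero]
        rw [← heq]
        exact W.smul_mem _ hEs
    rw [eq_top_iff]
    intro w _
    have hw : w = ∑ i : Fin d, Pi.single i (w i) := (Finset.univ_sum_single w).symm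
    rw [hw]
    apply Submodule.sum_mem
    intro i _
    have hsingle : (Pi.single i (w i) : Fin d → ℂ)
        = (w i) • (Pi.single i (1 : ℂ) : Fin d → ℂ) := by
      funext j
      by_cases h : j = i <;> simp [Pi.single_apply, h]
    rw [hsingle]
    apply W.smul_mem
    have hieq : i = (⟨d - 1 - (d - 1 - (i : ℕ)), by omega⟩ : Fin d) := by
      apply Fin.ext; simp; omega
    rw [hieq]
    exact hall (d - 1 - (i : ℕ)) (by omega)

private lemma sum_ite_fin {d : ℕ} (k : ℕ) (a : Fin d → ℂ) :
    (∑ j : Fin d, if (j : ℕ) = k then a j else 0) =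
      if h : k < d then a ⟨k, h⟩ else 0 := by
  split_ifs with h
  · rw [Finset.sum_eq_single (⟨k, h⟩ : Fin d)]
    · simp
    · intro b _ hb
      have : (b : ℕ) ≠ k := fun hc => hb (Fin.ext hc)
      simp [this]
    · simp
  · apply Finset.sum_eq_zero
    intro j _
    have := j.isLt
    have : (j : ℕ) ≠ k := by omega
    simp [this]

private noncomputable def cfun (q sq lam sigma η : ℂ) : ℕ → ℂ :=
  fun n => η⁻¹ * (sq * lam * (q⁻¹) ^ n - sq⁻¹ * lam⁻¹ * q ^ n - sigma * (-1) ^ n)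

private lemma mulVec_k {d : ℕ} (q lam : ℂ) (v : Fin d → ℂ) (i : Fin d) :
    (lam • Qmat q d).mulVec v i = (lam * (q⁻¹) ^ (i : ℕ)) * v i := by
  simp [Qmat, Matrix.smul_mulVec, Matrix.mulVec_diagonal, mul_assoc]

private lemma mulVec_f {d : ℕ} (v : Fin d → ℂ) (i : Fin d) :
    (Pnil d).mulVec v i =
      if (i : ℕ) = 0 then 0
      else v ⟨(i : ℕ) - 1, lt_of_le_of_lt (Nat.pred_le _) i.isLt⟩ := by
  unfold Pnil Matrix.mulVec dotProduct
  simp only [Matrix.of_apply, ite_mul, one_mul, zero_mul]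
  by_cases h : (i : ℕ) = 0
  · rw [if_pos h]
    apply Finset.sum_eq_zero
    intro j _
    rw [if_neg (by omega)]
  · rw [if_neg h]
    have hcongr : (∑ j : Fin d, if (i : ℕ) = (j : ℕ) + 1 then v j else 0)
        = ∑ j : Fin d, if (j : ℕ) = (i : ℕ) - 1 then v j else 0 := by
      apply Finset.sum_congr rfl
      intro j _
      exact if_congr (by omega) rfl rfl
    rw [hcongr, sum_ite_fin, dif_pos (show (i : ℕ) - 1 < d from lt_of_le_of_lt (Nat.pred_le _) i.isLt)]

private lemma mulVec_e {d : ℕ} (q sq lam sigma η : ℂ) (v : Fin d → ℂ) (i : Fin d) :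
    ((η⁻¹ • (Pnil' d * ((sq * lam) • Qmat q d - (sq⁻¹ * lam⁻¹) • QmatInv q d
        - sigma • Umat d))).mulVec v) i =
      if h : (i : ℕ) + 1 < d then
        cfun q sq lam sigma η ((i : ℕ) + 1) * v ⟨(i : ℕ) + 1, h⟩
      else 0 := by
  have hD : ((sq * lam) • Qmat q d - (sq⁻¹ * lam⁻¹) • QmatInv q d - sigma • Umat d)
      = Matrix.diagonal (fun j : Fin d =>
          sq * lam * (q⁻¹) ^ (j : ℕ) - sq⁻¹ * lam⁻¹ * q ^ (j : ℕ)
            - sigma * (-1) ^ (j : ℕ)) := by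
    unfold Qmat QmatInv Umat
    ext a b
    by_cases h : a = b
    · subst h
      simp [Matrix.diagonal_apply_eq]
    · simp [Matrix.diagonal_apply_ne _ h, h]
  rw [hD]
  unfold Matrix.mulVec dotProduct
  simp only [Matrix.smul_apply, Matrix.mul_diagonal, Pnil', Matrix.of_apply, smul_eq_mul]
  have hcongr : (∑ j : Fin d, η⁻¹ * ((if (j : ℕ) = (i : ℕ) + 1 then 1 else 0) *
        (sq * lam * (q⁻¹) ^ (j : ℕ) - sq⁻¹ * lam⁻¹ * q ^ (j : ℕ)
          - sigma * (-1) ^ (j : ℕ))) * v j)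
      = ∑ j : Fin d, if (j : ℕ) = (i : ℕ) + 1 then cfun q sq lam sigma η (j : ℕ) * v j else 0 := by
    apply Finset.sum_congr rfl
    intro j _
    unfold cfun
    split_ifs <;> ring
  rw [hcongr, sum_ite_fin]


private lemma alg1 (q sq lam : ℂ) (hsq : sq ^ 2 = q) (hsq0 : sq ≠ 0) (hlam : lam ≠ 0)
    (n : ℕ) :
    sq * lam * q ^ n *
        (sq * lam * (q⁻¹) ^ n - sq⁻¹ * lam⁻¹ * q ^ n
          - (sq * lam - sq⁻¹ * lam⁻¹) * (-1) ^ n)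
      = -(((-q) ^ n - 1) * (q * lam ^ 2 + (-q) ^ n)) := by
  subst hsq
  rcases Nat.even_or_odd n with hn | hn
  · rw [hn.neg_one_pow, hn.neg_pow, inv_pow]
    field_simp
    ring
  · rw [hn.neg_one_pow, hn.neg_pow, inv_pow]
    field_simp
    ring

private lemma alg2 (q sq lam t : ℂ) (hsq : sq ^ 2 = q) (hsq0 : sq ≠ 0) (hlam : lam ≠ 0)
    (ht : t ≠ 0) (d : ℕ) :
    sq * lam * q ^ d * t *
        (sq * (q ^ d)⁻¹ * lam + q ^ d * sq⁻¹ * lam⁻¹ * t⁻¹)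
      = q * lam ^ 2 * t + q ^ d * q ^ d := by
  subst hsq
  field_simp

/-- The nilpotent module `M_d(λ)` of `U_q(osp(1|2))` (`q` a primitive `l`-th
root of unity, `l > 2`, `q' = -q` of order `l'`) is irreducible — i.e. the only
subspaces invariant under `e`, `f`, `k` are `⊥` and `⊤` — if and only if
`∏_{n=1}^{d-1} (q'ⁿ - 1)(q^{1/2-d}λ + q^{d-1/2}λ⁻¹ q'⁻ⁿ) ≠ 0`; equivalently,
iff either `d < l'`, or `d = l'` and `q'λ²` is not a nontrivial power of `q'`. -/
theorem nilpotent_module_irreducible_iff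
    (q sq : ℂ) (l : ℕ) (hl : 2 < l) (hprim : IsPrimitiveRoot q l) (hsq : sq ^ 2 = q)
    (l' : ℕ) (hl' : l' = orderOf (-q))
    (d : ℕ) (hd : 1 ≤ d)
    (lam sigma : ℂ) (hlam : lam ≠ 0)
    (hsigma : sigma = sq * lam - sq⁻¹ * lam⁻¹)
    (hquant : ((-q) ^ d - 1) * (lam ^ 2 - (-q) ^ (d - 1)) = 0)
    (η : ℂ) (hη : η = (sq + sq⁻¹) * (q - q⁻¹))
    (kM fM eM : Matrix (Fin d) (Fin d) ℂ)
    (hk : kM = lam • Qmat q d)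
    (hf : fM = Pnil d)
    (he : eM = η⁻¹ •
      (Pnil' d * ((sq * lam) • Qmat q d - (sq⁻¹ * lam⁻¹) • QmatInv q d
        - sigma • Umat d))) :
    ((∀ W : Submodule ℂ (Fin d → ℂ),
        (∀ v ∈ W, eM.mulVec v ∈ W) → (∀ v ∈ W, fM.mulVec v ∈ W) →
        (∀ v ∈ W, kM.mulVec v ∈ W) → W = ⊥ ∨ W = ⊤) ↔
      (∏ n ∈ Finset.Icc 1 (d - 1),
          (((-q) ^ n - 1) *
            (sq * (q ^ d)⁻¹ * lam + q ^ d * sq⁻¹ * lam⁻¹ * ((-q) ^ n)⁻¹)) ≠ 0)) ∧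
    ((∀ W : Submodule ℂ (Fin d → ℂ),
        (∀ v ∈ W, eM.mulVec v ∈ W) → (∀ v ∈ W, fM.mulVec v ∈ W) →
        (∀ v ∈ W, kM.mulVec v ∈ W) → W = ⊥ ∨ W = ⊤) ↔
      (d < l' ∨ (d = l' ∧ ¬ ∃ j : ℕ, 0 < j ∧ j < l' ∧ (-q) * lam ^ 2 = (-q) ^ j))) := by

  -- basic nonvanishing facts
  have hq0 : q ≠ 0 := by
    intro h
    have h1 := hprim.pow_eq_one
    rw [h, zero_pow (by omega : l ≠ 0)] at h1
    exact one_ne_zero h1.symm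
  have hsq0 : sq ≠ 0 := by
    intro h
    apply hq0
    rw [← hsq, h]; ring
  have hqq0 : (-q) ≠ 0 := neg_ne_zero.mpr hq0
  have hq2 : q ^ 2 ≠ 1 := by
    intro h
    have hdvd : l ∣ 2 := hprim.dvd_of_pow_eq_one 2 h
    have := Nat.le_of_dvd (by omega) hdvd
    omega
  have hη0 : η ≠ 0 := by
    rw [hη]
    apply mul_ne_zero
    · intro h
      apply hq2
      have h1 : sq * (sq + sq⁻¹) = 0 := by rw [h, mul_zero]
      rw [mul_add, mul_inv_cancel₀ hsq0] at h1
      have h2 : q = -1 := by linear_combination h1 - hsq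
      rw [h2]; ring
    · intro h
      apply hq2
      have h1 : q * (q - q⁻¹) = 0 := by rw [h, mul_zero]
      rw [mul_sub, mul_inv_cancel₀ hq0] at h1
      linear_combination h1
  have hfin : IsOfFinOrder (-q) := by
    rw [isOfFinOrder_iff_pow_eq_one]
    refine ⟨2 * l, by omega, ?_⟩
    rw [pow_mul, neg_sq, ← pow_mul, mul_comm 2 l, pow_mul, hprim.pow_eq_one, one_pow]
  have hl'pos : 0 < l' := by rw [hl']; exact orderOf_pos_iff.mpr hfin
  -- the irreducibility criterion in terms of the weights
  have heMul : ∀ (v : Fin d → ℂ) (i : Fin d), eM.mulVec v i =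
      if h : (i : ℕ) + 1 < d then
        cfun q sq lam sigma η ((i : ℕ) + 1) * v ⟨(i : ℕ) + 1, h⟩
      else 0 := by
    intro v i
    rw [he]
    exact mulVec_e q sq lam sigma η v i
  have hfMul : ∀ (v : Fin d → ℂ) (i : Fin d), fM.mulVec v i =
      if (i : ℕ) = 0 then 0
      else v ⟨(i : ℕ) - 1, lt_of_le_of_lt (Nat.pred_le _) i.isLt⟩ := by
    intro v i
    rw [hf]
    exact mulVec_f v i
  have hkMul : ∀ (v : Fin d → ℂ) (i : Fin d), kM.mulVec v i =
      (lam * (q⁻¹) ^ (i : ℕ)) * v i := by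
    intro v i
    rw [hk]
    exact mulVec_k q lam v i
  have hIrr := shift_irred d hd (cfun q sq lam sigma η)
    (fun i => lam * (q⁻¹) ^ (i : ℕ)) (fun v => eM.mulVec v) (fun v => fM.mulVec v)
    (fun v => kM.mulVec v) heMul hfMul hkMul
  -- weight vanishing criterion
  have hc_iff : ∀ n : ℕ, (cfun q sq lam sigma η n = 0 ↔
      ((-q) ^ n = 1 ∨ (-q) * lam ^ 2 = (-q) ^ n)) := by
    intro n
    have h1 : cfun q sq lam sigma η n = 0 ↔
        (sq * lam * (q⁻¹) ^ n - sq⁻¹ * lam⁻¹ * q ^ n - sigma * (-1) ^ n) = 0 := by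
      unfold cfun
      constructor
      · intro h
        rcases mul_eq_zero.mp h with h | h
        · exact absurd h (inv_ne_zero hη0)
        · exact h
      · intro h
        rw [h, mul_zero]
    rw [h1, hsigma]
    have h2 := alg1 q sq lam hsq hsq0 hlam n
    have h5 : sq * lam * q ^ n ≠ 0 :=
      mul_ne_zero (mul_ne_zero hsq0 hlam) (pow_ne_zero _ hq0)
    constructor
    · intro h
      have h3 : ((-q) ^ n - 1) * (q * lam ^ 2 + (-q) ^ n) = 0 := by
        have h4 := h2
        rw [h, mul_zero] at h4
        exact neg_eq_zero.mp h4.symm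
      rcases mul_eq_zero.mp h3 with h4 | h4
      · exact Or.inl (by linear_combination h4)
      · exact Or.inr (by linear_combination -h4)
    · intro h
      have h3 : ((-q) ^ n - 1) * (q * lam ^ 2 + (-q) ^ n) = 0 := by
        rcases h with h | h
        · rw [show (-q) ^ n - 1 = 0 by linear_combination h, zero_mul]
        · rw [show q * lam ^ 2 + (-q) ^ n = 0 by linear_combination -h, mul_zero]
      have h4 : sq * lam * q ^ n *
          (sq * lam * (q⁻¹) ^ n - sq⁻¹ * lam⁻¹ * q ^ n
            - (sq * lam - sq⁻¹ * lam⁻¹) * (-1) ^ n) = 0 := by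
        rw [h2, h3, neg_zero]
      exact (mul_eq_zero.mp h4).resolve_left h5
  -- product factor vanishing criterion
  have hP_iff : ∀ n : ℕ,
      ((((-q) ^ n - 1) * (sq * (q ^ d)⁻¹ * lam + q ^ d * sq⁻¹ * lam⁻¹ * ((-q) ^ n)⁻¹)) = 0
        ↔ ((-q) ^ n = 1 ∨ (-q) * lam ^ 2 * (-q) ^ n = (-q) ^ (2 * d))) := by
    intro n
    have ht : (-q) ^ n ≠ 0 := pow_ne_zero n hqq0
    have h2 := alg2 q sq lam ((-q) ^ n) hsq hsq0 hlam ht d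
    have h2d : (-q) ^ (2 * d) = q ^ d * q ^ d := by
      rw [pow_mul, neg_sq, ← pow_mul, two_mul, pow_add]
    rw [h2d, mul_eq_zero]
    constructor
    · rintro (h | h)
      · exact Or.inl (by linear_combination h)
      · right
        have h4 : q * lam ^ 2 * ((-q) ^ n) + q ^ d * q ^ d = 0 := by
          rw [← h2, h, mul_zero]
        linear_combination -h4
    · rintro (h | h)
      · exact Or.inl (by linear_combination h)
      · right
        have h4 : q * lam ^ 2 * ((-q) ^ n) + q ^ d * q ^ d = 0 := by
          linear_combination -h
        have h5 : sq * lam * q ^ d * ((-q) ^ n) *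
            (sq * (q ^ d)⁻¹ * lam + q ^ d * sq⁻¹ * lam⁻¹ * ((-q) ^ n)⁻¹) = 0 := by
          rw [h2, h4]
        have h6 : sq * lam * q ^ d * ((-q) ^ n) ≠ 0 :=
          mul_ne_zero (mul_ne_zero (mul_ne_zero hsq0 hlam) (pow_ne_zero _ hq0)) ht
        exact (mul_eq_zero.mp h5).resolve_left h6
  -- restate irreducibility via conditions
  have hIrr2 : (∀ W : Submodule ℂ (Fin d → ℂ),
        (∀ v ∈ W, eM.mulVec v ∈ W) → (∀ v ∈ W, fM.mulVec v ∈ W) →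
        (∀ v ∈ W, kM.mulVec v ∈ W) → W = ⊥ ∨ W = ⊤) ↔
      (∀ n, 1 ≤ n → n < d → ((-q) ^ n ≠ 1 ∧ (-q) * lam ^ 2 ≠ (-q) ^ n)) := by
    rw [hIrr]
    constructor
    · intro H n h1 h2
      have := H n h1 h2
      rw [Ne, hc_iff n, not_or] at this
      exact this
    · intro H n h1 h2
      rw [Ne, hc_iff n, not_or]
      exact H n h1 h2
  -- the product criterion
  have hprodIff : (∏ n ∈ Finset.Icc 1 (d - 1),
        (((-q) ^ n - 1) *
          (sq * (q ^ d)⁻¹ * lam + q ^ d * sq⁻¹ * lam⁻¹ * ((-q) ^ n)⁻¹)) ≠ 0) ↔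
      (∀ n, 1 ≤ n → n < d →
        ((-q) ^ n ≠ 1 ∧ (-q) * lam ^ 2 * (-q) ^ n ≠ (-q) ^ (2 * d))) := by
    rw [Finset.prod_ne_zero_iff]
    constructor
    · intro H n h1 h2
      have := H n (Finset.mem_Icc.mpr ⟨h1, by omega⟩)
      rw [Ne, hP_iff n, not_or] at this
      exact this
    · intro H n hn
      rw [Finset.mem_Icc] at hn
      rw [Ne, hP_iff n, not_or]
      exact H n hn.1 (by omega)
  -- equivalence of the two conditions using the quantum constraint
  have comb : (∀ n, 1 ≤ n → n < d → ((-q) ^ n ≠ 1 ∧ (-q) * lam ^ 2 ≠ (-q) ^ n)) ↔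
      (∀ n, 1 ≤ n → n < d →
        ((-q) ^ n ≠ 1 ∧ (-q) * lam ^ 2 * (-q) ^ n ≠ (-q) ^ (2 * d))) := by
    rcases mul_eq_zero.mp hquant with hq1 | hq1
    · have hqd : (-q) ^ d = 1 := by linear_combination hq1
      have h2d : (-q) ^ (2 * d) = 1 := by rw [two_mul, pow_add, hqd, one_mul]
      have hsub : ∀ n, 1 ≤ n → n < d → ((-q) ^ (d - n) * (-q) ^ n = 1) := by
        intro n h1 h2
        rw [← pow_add, show d - n + n = d by omega]
        exact hqd
      have helper : ∀ n, 1 ≤ n → n < d →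
          ((((-q) ^ (d - n) ≠ 1 ∧ (-q) * lam ^ 2 ≠ (-q) ^ (d - n))) ↔
            (((-q) ^ n ≠ 1 ∧ (-q) * lam ^ 2 * (-q) ^ n ≠ (-q) ^ (2 * d)))) := by
        intro n h1 h2
        have hs := hsub n h1 h2
        have e1 : ((-q) ^ (d - n) = 1) ↔ ((-q) ^ n = 1) := by
          constructor
          · intro h
            rw [h, one_mul] at hs
            exact hs
          · intro h
            rw [h, mul_one] at hs
            exact hs
        have e2 : ((-q) * lam ^ 2 = (-q) ^ (d - n)) ↔
            ((-q) * lam ^ 2 * (-q) ^ n = (-q) ^ (2 * d)) := by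
          rw [h2d]
          constructor
          · intro h
            linear_combination (-q) ^ n * h + hs
          · intro h
            linear_combination (-q) ^ (d - n) * h - (-q) * lam ^ 2 * hs
        exact and_congr (not_congr e1) (not_congr e2)
      constructor
      · intro H n h1 h2
        exact (helper n h1 h2).mp (H (d - n) (by omega) (by omega))
      · intro H n h1 h2
        have h3 := helper (d - n) (by omega) (by omega)
        rw [show d - (d - n) = n by omega] at h3
        exact h3.mpr (H (d - n) (by omega) (by omega))
    · have hqd2 : (-q) * lam ^ 2 = (-q) ^ d := by
        rw [show lam ^ 2 = (-q) ^ (d - 1) by linear_combination hq1, ← pow_succ']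
        congr 1
        omega
      have hIff : ∀ n : ℕ, (((-q) * lam ^ 2 = (-q) ^ n) ↔
          ((-q) * lam ^ 2 * (-q) ^ n = (-q) ^ (2 * d))) := by
        intro n
        rw [hqd2, two_mul, pow_add]
        constructor
        · intro h
          rw [h]
        · intro h
          exact (mul_left_cancel₀ (pow_ne_zero d hqq0) h).symm
      constructor
      · intro H n h1 h2
        exact ⟨(H n h1 h2).1, fun hc => (H n h1 h2).2 ((hIff n).mpr hc)⟩
      · intro H n h1 h2
        exact ⟨(H n h1 h2).1, fun hc => (H n h1 h2).2 ((hIff n).mp hc)⟩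
  -- the order-theoretic criterion
  have ord : (∀ n, 1 ≤ n → n < d → ((-q) ^ n ≠ 1 ∧ (-q) * lam ^ 2 ≠ (-q) ^ n)) ↔
      (d < l' ∨ (d = l' ∧ ¬ ∃ j : ℕ, 0 < j ∧ j < l' ∧ (-q) * lam ^ 2 = (-q) ^ j)) := by
    have hpow1 : ∀ n : ℕ, ((-q) ^ n = 1 ↔ l' ∣ n) := by
      intro n
      rw [hl']
      exact orderOf_dvd_iff_pow_eq_one.symm
    have hne1 : ∀ n, 0 < n → n < l' → (-q) ^ n ≠ 1 := by
      intro n h1 h2 h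
      have h3 := (hpow1 n).mp h
      have := Nat.le_of_dvd h1 h3
      omega
    rcases lt_trichotomy d l' with hdl | hdl | hdl
    · constructor
      · intro _
        exact Or.inl hdl
      · intro _ n h1 h2
        refine ⟨hne1 n h1 (by omega), ?_⟩
        have hqdne : (-q) ^ d ≠ 1 := hne1 d (by omega) hdl
        have hq1 : lam ^ 2 - (-q) ^ (d - 1) = 0 := by
          rcases mul_eq_zero.mp hquant with h | h
          · exact absurd (by linear_combination h) hqdne
          · exact h
        have hql : (-q) * lam ^ 2 = (-q) ^ d := by
          rw [show lam ^ 2 = (-q) ^ (d - 1) by linear_combination hq1, ← pow_succ']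
          congr 1
          omega
        rw [hql]
        intro h
        have h7 : (-q) ^ (d - n) = 1 := by
          apply mul_right_cancel₀ (pow_ne_zero n hqq0)
          rw [one_mul, ← pow_add, show d - n + n = d by omega]
          exact h
        exact hne1 (d - n) (by omega) (by omega) h7
    · constructor
      · intro H
        right
        refine ⟨hdl, ?_⟩
        rintro ⟨j, hj0, hjl, hjeq⟩
        exact (H j (by omega) (by omega)).2 hjeq
      · rintro (h | ⟨_, h⟩) n h1 h2
        · exact absurd hdl (Nat.ne_of_lt h)
        · exact ⟨hne1 n h1 (by omega), fun hc => h ⟨n, by omega, by omega, hc⟩⟩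
    · constructor
      · intro H
        exfalso
        have h1 := (H l' (by omega) (by omega)).1
        exact h1 (hl' ▸ pow_orderOf_eq_one (-q))
      · intro h
        exfalso
        rcases h with h | ⟨h, _⟩ <;> omega
  exact ⟨hIrr2.trans (comb.trans hprodIff.symm), hIrr2.trans ord⟩
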